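/- If in addition the drift is bounded, |b(x)| ≤ C₈ for all x ∈ ℝ^d with C₈ > 0, then there exists a constant C₉ > 0, depending only on d, η₁, η₂, C₃, C₅, C₆, C₇, C₈, such that ‖A_t(x) − A_s(x)‖ ≤ C₉ e^{C₉(|t| ∨ |s|)} |s − t|^{η₁ ∧ η₂} for all t, s ∈ ℝ and all x ∈ ℝ^d. -/

import Mathlib

open Real Set

/-- Two-sided Grönwall from 0. -/
lemma gronwall_abs {F : Type*} [NormedAddCommGroup F] [NormedSpace ℝ F]
    {f f' : ℝ → F} {K ε δ : ℝ}
    (hf : ∀ t, HasDerivAt f (f' t) t) (T : ℝ)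
    (hb : ∀ t, |t| ≤ |T| → ‖f' t‖ ≤ K * ‖f t‖ + ε)
    (h0 : ‖f 0‖ ≤ δ) :
    ‖f T‖ ≤ gronwallBound δ K ε |T| := by
  rcases le_total 0 T with hT | hT
  · have := norm_le_gronwallBound_of_norm_deriv_right_le (f := f) (f' := f') (a := 0) (b := T)
      (fun t ht => (hf t).continuousAt.continuousWithinAt)
      (fun t ht => (hf t).hasDerivWithinAt)
      h0
      (fun t ht => hb t (by rw [abs_of_nonneg ht.1, abs_of_nonneg hT]; exact ht.2.le))
      T ⟨hT, le_refl T⟩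
    simpa [abs_of_nonneg hT] using this
  · have hg : ∀ u, HasDerivAt (fun u => f (-u)) (-f' (-u)) u := by
      intro u
      simpa [Function.comp_def] using (hf (-u)).scomp u (hasDerivAt_neg u)
    have := norm_le_gronwallBound_of_norm_deriv_right_le (f := fun u => f (-u))
      (f' := fun u => -f' (-u)) (a := 0) (b := -T)
      (fun t ht => ((hg t).continuousAt.continuousWithinAt))
      (fun t ht => (hg t).hasDerivWithinAt)
      (by simpa using h0)
      (fun t ht => by
        rw [norm_neg]
        exact hb (-t) (by rw [abs_neg, abs_of_nonneg ht.1, abs_of_nonpos hT]; exact ht.2.le))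
      (-T) ⟨by linarith, le_refl _⟩
    simpa [abs_of_nonpos hT] using this



set_option maxHeartbeats 1000000 in
/-- If in addition the drift is bounded (`|b(x)| ≤ C₈`), then there is
`C₉ > 0`, depending only on `d, η₁, η₂, C₃, C₅, C₆, C₇, C₈`, such that
`‖A_t(x) − A_s(x)‖ ≤ C₉ e^{C₉(|t| ∨ |s|)} |s − t|^{η₁ ∧ η₂}` for all `t, s ∈ ℝ`, `x ∈ ℝ^d`,
where `A_t(x) = Dκ_t(χ_t(x)) A(χ_t(x))` and `χ_t = κ_{−t}`. -/
theorem stmt8 (d : ℕ) (hd : 1 ≤ d) (C₃ C₅ C₆ C₇ C₈ η₁ η₂ : ℝ)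
    (hC₃ : 0 < C₃) (hC₅ : 0 < C₅) (hC₆ : 0 < C₆) (hC₇ : 0 < C₇) (hC₈ : 0 < C₈)
    (hη₁ : 0 < η₁) (hη₁' : η₁ ≤ 1) (hη₂ : 0 < η₂) (hη₂' : η₂ ≤ 1) :
    ∃ C₉ > 0,
      ∀ (b : EuclideanSpace ℝ (Fin d) → EuclideanSpace ℝ (Fin d)),
        Differentiable ℝ b →
        (∀ x, ‖fderiv ℝ b x‖ ≤ C₆) →
        (∀ x y, ‖fderiv ℝ b x - fderiv ℝ b y‖ ≤ C₇ * ‖x - y‖ ^ η₂) →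
        (∀ x, ‖b x‖ ≤ C₈) →
      ∀ (A : EuclideanSpace ℝ (Fin d) →
          (EuclideanSpace ℝ (Fin d) →L[ℝ] EuclideanSpace ℝ (Fin d))),
        (∀ x, ‖A x‖ ≤ C₃) →
        (∀ x y, ‖A x - A y‖ ≤ C₅ * ‖x - y‖ ^ η₁) →
      ∀ (κ : ℝ → EuclideanSpace ℝ (Fin d) → EuclideanSpace ℝ (Fin d))
        (Dκ : ℝ → EuclideanSpace ℝ (Fin d) →
          (EuclideanSpace ℝ (Fin d) →L[ℝ] EuclideanSpace ℝ (Fin d))),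
        (∀ x, κ 0 x = x) →
        (∀ (t : ℝ) (x : EuclideanSpace ℝ (Fin d)),
          HasDerivAt (fun s => κ s x) (-(b (κ t x))) t) →
        (∀ (t : ℝ) (x : EuclideanSpace ℝ (Fin d)), HasFDerivAt (κ t) (Dκ t x) x) →
        (∀ x, Dκ 0 x = ContinuousLinearMap.id ℝ (EuclideanSpace ℝ (Fin d))) →
        (∀ (t : ℝ) (x : EuclideanSpace ℝ (Fin d)),
          HasDerivAt (fun s => Dκ s x) (-((fderiv ℝ b (κ t x)).comp (Dκ t x))) t) →
      ∀ (t s : ℝ) (x : EuclideanSpace ℝ (Fin d)),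
        ‖(Dκ t (κ (-t) x)).comp (A (κ (-t) x)) - (Dκ s (κ (-s) x)).comp (A (κ (-s) x))‖
          ≤ C₉ * Real.exp (C₉ * max |t| |s|) * |s - t| ^ min η₁ η₂ := by
  set K' : ℝ := C₅ * (1 + C₈) + C₃ * C₆ + C₃ * (C₇ / C₆) * (1 + C₈) with hK'def
  have hK' : 0 < K' := by positivity
  refine ⟨2 * K' + 3 * C₆ + 1, by positivity, ?_⟩
  set C₉ : ℝ := 2 * K' + 3 * C₆ + 1 with hC₉def
  intro b hbdiff hDb hDbHol hbB A hAb hAHol κ Dκ hκ0 hκd hκF hDκ0 hDκd t s x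
  set α : ℝ := min η₁ η₂ with hαdef
  have hα : 0 < α := lt_min hη₁ hη₂
  have hα1 : α ≤ 1 := le_trans (min_le_left _ _) hη₁'
  -- ‖Dκ u y‖ ≤ exp (C₆ |u|)
  have h1 : ∀ (u : ℝ) y, ‖Dκ u y‖ ≤ exp (C₆ * |u|) := by
    intro u y
    have := gronwall_abs (f := fun v => Dκ v y)
      (f' := fun v => -((fderiv ℝ b (κ v y)).comp (Dκ v y))) (K := C₆) (ε := 0) (δ := 1)
      (fun v => hDκd v y) u
      (fun v _ => by
        rw [norm_neg, add_zero]
        calc ‖(fderiv ℝ b (κ v y)).comp (Dκ v y)‖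
            ≤ ‖fderiv ℝ b (κ v y)‖ * ‖Dκ v y‖ := ContinuousLinearMap.opNorm_comp_le _ _
          _ ≤ C₆ * ‖Dκ v y‖ := by
              exact mul_le_mul_of_nonneg_right (hDb _) (norm_nonneg _))
      (by show ‖Dκ 0 y‖ ≤ 1; rw [hDκ0]; exact ContinuousLinearMap.norm_id_le)
    rwa [gronwallBound_ε0, one_mul] at this
  -- spatial Lipschitz of the flow
  have h2 : ∀ (u : ℝ) y z, ‖κ u y - κ u z‖ ≤ exp (C₆ * |u|) * ‖y - z‖ := by
    intro u y z
    have := Convex.norm_image_sub_le_of_norm_hasFDerivWithin_le (f := κ u)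
      (f' := fun w => Dκ u w) (C := exp (C₆ * |u|)) (s := univ)
      (fun w _ => (hκF u w).hasFDerivWithinAt) (fun w _ => h1 u w)
      convex_univ (mem_univ z) (mem_univ y)
    simpa using this
  -- time Lipschitz of the flow
  have h3 : ∀ (u v : ℝ) y, ‖κ u y - κ v y‖ ≤ C₈ * |u - v| := by
    intro u v y
    have := Convex.norm_image_sub_le_of_norm_hasDerivWithin_le (f := fun w => κ w y)
      (f' := fun w => -(b (κ w y))) (C := C₈) (s := univ)
      (fun w _ => (hκd w y).hasDerivWithinAt) (fun w _ => by rw [norm_neg]; exact hbB _)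
      convex_univ (mem_univ v) (mem_univ u)
    simpa [Real.norm_eq_abs] using this
  -- time Lipschitz of Dκ on a bounded window
  have h4 : ∀ (m u v : ℝ) y, |u| ≤ m → |v| ≤ m →
      ‖Dκ u y - Dκ v y‖ ≤ C₆ * exp (C₆ * m) * |u - v| := by
    intro m u v y hu hv
    have hm : (0:ℝ) ≤ m := le_trans (abs_nonneg u) hu
    have := Convex.norm_image_sub_le_of_norm_hasDerivWithin_le (f := fun w => Dκ w y)
      (f' := fun w => -((fderiv ℝ b (κ w y)).comp (Dκ w y))) (C := C₆ * exp (C₆ * m))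
      (s := Icc (-m) m)
      (fun w _ => (hDκd w y).hasDerivWithinAt)
      (fun w hw => by
        rw [norm_neg]
        calc ‖(fderiv ℝ b (κ w y)).comp (Dκ w y)‖
            ≤ ‖fderiv ℝ b (κ w y)‖ * ‖Dκ w y‖ := ContinuousLinearMap.opNorm_comp_le _ _
          _ ≤ C₆ * exp (C₆ * |w|) :=
              mul_le_mul (hDb _) (h1 w y) (norm_nonneg _) hC₆.le
          _ ≤ C₆ * exp (C₆ * m) := by
              have : |w| ≤ m := abs_le.2 ⟨hw.1, hw.2⟩
              exact mul_le_mul_of_nonneg_left (exp_le_exp.2 (by nlinarith)) hC₆.le)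
      (convex_Icc _ _) (abs_le.1 hv) (abs_le.1 hu)
    rwa [Real.norm_eq_abs] at this
  -- spatial Hölder continuity of Dκ
  have h5 : ∀ (u : ℝ) y z,
      ‖Dκ u y - Dκ u z‖ ≤ C₇ / C₆ * exp (3 * C₆ * |u|) * ‖y - z‖ ^ η₂ := by
    intro u y z
    set ε : ℝ := C₇ * exp (2 * C₆ * |u|) * ‖y - z‖ ^ η₂ with hεdef
    have key := gronwall_abs (f := fun v => Dκ v y - Dκ v z)
      (f' := fun v => -((fderiv ℝ b (κ v y)).comp (Dκ v y)) -
        -((fderiv ℝ b (κ v z)).comp (Dκ v z))) (K := C₆) (ε := ε) (δ := 0)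
      (fun v => (hDκd v y).sub (hDκd v z)) u
      (fun v hv => by
        beta_reduce
        have hrw : -((fderiv ℝ b (κ v y)).comp (Dκ v y)) -
            -((fderiv ℝ b (κ v z)).comp (Dκ v z)) =
            -((fderiv ℝ b (κ v y)).comp (Dκ v y - Dκ v z)) -
            ((fderiv ℝ b (κ v y) - fderiv ℝ b (κ v z)).comp (Dκ v z)) := by
          rw [ContinuousLinearMap.comp_sub, ContinuousLinearMap.sub_comp]; abel
        rw [hrw]
        have t1 : ‖-((fderiv ℝ b (κ v y)).comp (Dκ v y - Dκ v z))‖ ≤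
            C₆ * ‖Dκ v y - Dκ v z‖ := by
          rw [norm_neg]
          calc ‖(fderiv ℝ b (κ v y)).comp (Dκ v y - Dκ v z)‖
              ≤ ‖fderiv ℝ b (κ v y)‖ * ‖Dκ v y - Dκ v z‖ :=
                ContinuousLinearMap.opNorm_comp_le _ _
            _ ≤ C₆ * ‖Dκ v y - Dκ v z‖ :=
                mul_le_mul_of_nonneg_right (hDb _) (norm_nonneg _)
        have t2 : ‖(fderiv ℝ b (κ v y) - fderiv ℝ b (κ v z)).comp (Dκ v z)‖ ≤ ε := by
          have hκyz : ‖κ v y - κ v z‖ ^ η₂ ≤ exp (C₆ * |v|) * ‖y - z‖ ^ η₂ := by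
            calc ‖κ v y - κ v z‖ ^ η₂ ≤ (exp (C₆ * |v|) * ‖y - z‖) ^ η₂ :=
                  Real.rpow_le_rpow (norm_nonneg _) (h2 v y z) hη₂.le
              _ = exp (C₆ * |v|) ^ η₂ * ‖y - z‖ ^ η₂ :=
                  Real.mul_rpow (exp_pos _).le (norm_nonneg _)
              _ ≤ exp (C₆ * |v|) * ‖y - z‖ ^ η₂ := by
                  have h1e : (1:ℝ) ≤ exp (C₆ * |v|) :=
                    one_le_exp (by positivity)
                  have := Real.rpow_le_rpow_of_exponent_le h1e hη₂'
                  rw [Real.rpow_one] at this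
                  exact mul_le_mul_of_nonneg_right this (by positivity)
          calc ‖(fderiv ℝ b (κ v y) - fderiv ℝ b (κ v z)).comp (Dκ v z)‖
              ≤ ‖fderiv ℝ b (κ v y) - fderiv ℝ b (κ v z)‖ * ‖Dκ v z‖ :=
                ContinuousLinearMap.opNorm_comp_le _ _
            _ ≤ (C₇ * ‖κ v y - κ v z‖ ^ η₂) * exp (C₆ * |v|) := by
                apply mul_le_mul (hDbHol _ _) (h1 v z) (norm_nonneg _) (by positivity)
            _ ≤ (C₇ * (exp (C₆ * |v|) * ‖y - z‖ ^ η₂)) * exp (C₆ * |v|) := by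
                apply mul_le_mul_of_nonneg_right _ (exp_pos _).le
                exact mul_le_mul_of_nonneg_left hκyz hC₇.le
            _ = C₇ * (exp (C₆ * |v|) * exp (C₆ * |v|)) * ‖y - z‖ ^ η₂ := by ring
            _ = C₇ * exp (2 * C₆ * |v|) * ‖y - z‖ ^ η₂ := by
                rw [← exp_add]; ring_nf
            _ ≤ ε := by
                rw [hεdef]
                apply mul_le_mul_of_nonneg_right _ (by positivity)
                apply mul_le_mul_of_nonneg_left (exp_le_exp.2 (by nlinarith)) hC₇.le
        calc ‖_ - _‖ ≤ ‖-((fderiv ℝ b (κ v y)).comp (Dκ v y - Dκ v z))‖ +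
              ‖(fderiv ℝ b (κ v y) - fderiv ℝ b (κ v z)).comp (Dκ v z)‖ := norm_sub_le _ _
          _ ≤ C₆ * ‖Dκ v y - Dκ v z‖ + ε := add_le_add t1 t2)
      (by
        show ‖Dκ 0 y - Dκ 0 z‖ ≤ 0
        rw [hDκ0 y, hDκ0 z, sub_self, norm_zero])
    have hε0 : 0 ≤ ε := by positivity
    calc ‖Dκ u y - Dκ u z‖ ≤ gronwallBound 0 C₆ ε |u| := key
      _ = ε / C₆ * (exp (C₆ * |u|) - 1) := by
          rw [gronwallBound_of_K_ne_0 hC₆.ne']; ring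
      _ ≤ ε / C₆ * exp (C₆ * |u|) := by
          apply mul_le_mul_of_nonneg_left _ (by positivity)
          linarith [exp_pos (C₆ * |u|)]
      _ = C₇ / C₆ * exp (3 * C₆ * |u|) * ‖y - z‖ ^ η₂ := by
          rw [hεdef]
          rw [show (3:ℝ) * C₆ * |u| = 2 * C₆ * |u| + C₆ * |u| by ring, exp_add]
          ring
  -- abbreviations for the final estimate
  set m : ℝ := max |t| |s| with hmdef
  have hm0 : 0 ≤ m := le_trans (abs_nonneg t) (le_max_left _ _)
  set h : ℝ := |s - t| with hhdef
  have hh0 : 0 ≤ h := abs_nonneg _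
  have hh2m : h ≤ 2 * m := by
    calc h ≤ |s| + |t| := abs_sub _ _
      _ ≤ 2 * m := by
        have := le_max_right |t| |s|; have := le_max_left |t| |s|; simp only [hmdef]; nlinarith
  set Em : ℝ := exp m with hEmdef
  have hEm1 : (1:ℝ) ≤ Em := one_le_exp hm0
  set P : ℝ := h ^ α with hPdef
  have hP0 : 0 ≤ P := Real.rpow_nonneg hh0 _
  -- key power comparison
  have hpow : ∀ η : ℝ, 0 < η → η ≤ 1 → α ≤ η → h ^ η ≤ 2 * Em * P := by
    intro η hη hη1 hαη
    rcases eq_or_lt_of_le hh0 with h0 | h0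
    · rw [← h0, Real.zero_rpow hη.ne', hPdef, ← h0, Real.zero_rpow hα.ne']
      simp
    rcases le_or_gt h 1 with h1 | h1
    · calc h ^ η ≤ h ^ α := Real.rpow_le_rpow_of_exponent_ge h0 h1 hαη
        _ ≤ 2 * Em * P := by rw [hPdef]; nlinarith [Real.rpow_nonneg hh0 α]
    · have : h ^ η ≤ h ^ (α + 1) :=
        Real.rpow_le_rpow_of_exponent_le h1.le (by linarith)
      calc h ^ η ≤ h ^ (α + 1) := this
        _ = P * h := by rw [hPdef, Real.rpow_add h0, Real.rpow_one]
        _ ≤ P * (2 * Em) := by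
            apply mul_le_mul_of_nonneg_left _ hP0
            have := add_one_le_exp m
            simp only [hEmdef]; nlinarith
        _ = 2 * Em * P := by ring
  have hC8pow : ∀ η : ℝ, 0 < η → η ≤ 1 → (C₈ * h) ^ η ≤ (1 + C₈) * h ^ η := by
    intro η hη hη1
    rw [Real.mul_rpow hC₈.le hh0]
    apply mul_le_mul_of_nonneg_right _ (Real.rpow_nonneg hh0 _)
    rcases le_or_gt C₈ 1 with hc | hc
    · calc C₈ ^ η ≤ 1 := Real.rpow_le_one hC₈.le hc hη.le
        _ ≤ 1 + C₈ := by linarith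
    · calc C₈ ^ η ≤ C₈ ^ (1:ℝ) := Real.rpow_le_rpow_of_exponent_le hc.le hη1
        _ = C₈ := Real.rpow_one _
        _ ≤ 1 + C₈ := by linarith
  set y : EuclideanSpace ℝ (Fin d) := κ (-t) x with hydef
  set z : EuclideanSpace ℝ (Fin d) := κ (-s) x with hzdef
  have hyz : ‖y - z‖ ≤ C₈ * h := by
    calc ‖y - z‖ ≤ C₈ * |(-t) - (-s)| := h3 (-t) (-s) x
      _ = C₈ * h := by rw [hhdef, show -t - -s = s - t by ring]
  -- bound on ‖A y - A z‖
  have hA1 : ‖A y - A z‖ ≤ C₅ * (1 + C₈) * (2 * Em * P) := by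
    calc ‖A y - A z‖ ≤ C₅ * ‖y - z‖ ^ η₁ := hAHol _ _
      _ ≤ C₅ * (C₈ * h) ^ η₁ := by
          apply mul_le_mul_of_nonneg_left _ hC₅.le
          exact Real.rpow_le_rpow (norm_nonneg _) hyz hη₁.le
      _ ≤ C₅ * ((1 + C₈) * h ^ η₁) :=
          mul_le_mul_of_nonneg_left (hC8pow η₁ hη₁ hη₁') hC₅.le
      _ ≤ C₅ * ((1 + C₈) * (2 * Em * P)) := by
          apply mul_le_mul_of_nonneg_left _ hC₅.le
          exact mul_le_mul_of_nonneg_left (hpow η₁ hη₁ hη₁' (min_le_left _ _)) (by linarith)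
      _ = C₅ * (1 + C₈) * (2 * Em * P) := by ring
  set E3 : ℝ := exp (3 * C₆ * m) with hE3def
  have hE3pos : 0 < E3 := exp_pos _
  have hEbE3 : exp (C₆ * m) ≤ E3 := exp_le_exp.2 (by nlinarith)
  -- bound on ‖Dκ t y - Dκ s z‖
  have hD1 : ‖Dκ t y - Dκ s z‖ ≤
      C₆ * E3 * (2 * Em * P) + C₇ / C₆ * (1 + C₈) * E3 * (2 * Em * P) := by
    have ht' : ‖Dκ t y - Dκ s y‖ ≤ C₆ * exp (C₆ * m) * h := by
      have := h4 m t s y (le_max_left _ _) (le_max_right _ _)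
      rwa [show |t - s| = h by rw [hhdef, abs_sub_comm]] at this
    have hs' : ‖Dκ s y - Dκ s z‖ ≤ C₇ / C₆ * E3 * ((1 + C₈) * h ^ η₂) := by
      calc ‖Dκ s y - Dκ s z‖ ≤ C₇ / C₆ * exp (3 * C₆ * |s|) * ‖y - z‖ ^ η₂ := h5 s y z
        _ ≤ C₇ / C₆ * E3 * ‖y - z‖ ^ η₂ := by
            apply mul_le_mul_of_nonneg_right _ (Real.rpow_nonneg (norm_nonneg _) _)
            apply mul_le_mul_of_nonneg_left _ (by positivity)
            apply exp_le_exp.2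
            have : |s| ≤ m := le_max_right _ _
            nlinarith
        _ ≤ C₇ / C₆ * E3 * ((1 + C₈) * h ^ η₂) := by
            apply mul_le_mul_of_nonneg_left _ (by positivity)
            calc ‖y - z‖ ^ η₂ ≤ (C₈ * h) ^ η₂ :=
                Real.rpow_le_rpow (norm_nonneg _) hyz hη₂.le
              _ ≤ (1 + C₈) * h ^ η₂ := hC8pow η₂ hη₂ hη₂'
    calc ‖Dκ t y - Dκ s z‖ ≤ ‖Dκ t y - Dκ s y‖ + ‖Dκ s y - Dκ s z‖ := by
          have : Dκ t y - Dκ s z = (Dκ t y - Dκ s y) + (Dκ s y - Dκ s z) := by abel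
          rw [this]; exact norm_add_le _ _
      _ ≤ C₆ * exp (C₆ * m) * h + C₇ / C₆ * E3 * ((1 + C₈) * h ^ η₂) := add_le_add ht' hs'
      _ ≤ C₆ * E3 * (2 * Em * P) + C₇ / C₆ * (1 + C₈) * E3 * (2 * Em * P) := by
          apply add_le_add
          · calc C₆ * exp (C₆ * m) * h ≤ C₆ * E3 * h := by
                  apply mul_le_mul_of_nonneg_right _ hh0
                  exact mul_le_mul_of_nonneg_left hEbE3 hC₆.le
              _ ≤ C₆ * E3 * (2 * Em * P) := by
                  apply mul_le_mul_of_nonneg_left _ (by positivity)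
                  have := hpow 1 one_pos le_rfl hα1
                  rwa [Real.rpow_one] at this
          · calc C₇ / C₆ * E3 * ((1 + C₈) * h ^ η₂)
                ≤ C₇ / C₆ * E3 * ((1 + C₈) * (2 * Em * P)) := by
                  apply mul_le_mul_of_nonneg_left _ (by positivity)
                  exact mul_le_mul_of_nonneg_left
                    (hpow η₂ hη₂ hη₂' (min_le_right _ _)) (by linarith)
              _ = C₇ / C₆ * (1 + C₈) * E3 * (2 * Em * P) := by ring
  -- final assembly
  have hsplit : (Dκ t y).comp (A y) - (Dκ s z).comp (A z) =
      (Dκ t y).comp (A y - A z) + (Dκ t y - Dκ s z).comp (A z) := by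
    rw [ContinuousLinearMap.comp_sub, ContinuousLinearMap.sub_comp]; abel
  calc ‖(Dκ t y).comp (A y) - (Dκ s z).comp (A z)‖
      = ‖(Dκ t y).comp (A y - A z) + (Dκ t y - Dκ s z).comp (A z)‖ := by rw [hsplit]
    _ ≤ ‖(Dκ t y).comp (A y - A z)‖ + ‖(Dκ t y - Dκ s z).comp (A z)‖ := norm_add_le _ _
    _ ≤ ‖Dκ t y‖ * ‖A y - A z‖ + ‖Dκ t y - Dκ s z‖ * ‖A z‖ :=
        add_le_add (ContinuousLinearMap.opNorm_comp_le _ _)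
          (ContinuousLinearMap.opNorm_comp_le _ _)
    _ ≤ E3 * (C₅ * (1 + C₈) * (2 * Em * P)) +
        (C₆ * E3 * (2 * Em * P) + C₇ / C₆ * (1 + C₈) * E3 * (2 * Em * P)) * C₃ := by
        apply add_le_add
        · exact mul_le_mul (le_trans (h1 t y) (by
            calc exp (C₆ * |t|) ≤ exp (C₆ * m) :=
                exp_le_exp.2 (mul_le_mul_of_nonneg_left (le_max_left _ _) hC₆.le)
              _ ≤ E3 := hEbE3)) hA1 (norm_nonneg _) hE3pos.le
        · exact mul_le_mul hD1 (hAb z) (norm_nonneg _) (by positivity)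
    _ = 2 * K' * (E3 * (Em * P)) := by rw [hK'def]; ring
    _ ≤ C₉ * (exp (C₉ * m) * P) := by
        have he : E3 * Em = exp ((3 * C₆ + 1) * m) := by
          rw [hE3def, hEmdef, ← exp_add]; ring_nf
        have hee : exp ((3 * C₆ + 1) * m) ≤ exp (C₉ * m) := by
          apply exp_le_exp.2
          rw [hC₉def]; nlinarith
        calc 2 * K' * (E3 * (Em * P)) = 2 * K' * ((E3 * Em) * P) := by ring
          _ ≤ 2 * K' * (exp (C₉ * m) * P) := by
              apply mul_le_mul_of_nonneg_left _ (by positivity)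
              apply mul_le_mul_of_nonneg_right _ hP0
              rw [he]; exact hee
          _ ≤ C₉ * (exp (C₉ * m) * P) := by
              apply mul_le_mul_of_nonneg_right _ (by positivity)
              rw [hC₉def]; nlinarith
    _ = C₉ * exp (C₉ * m) * P := by ring
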